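/- If F is a k-antichain saturated family of subsets of [n], then F is the union of k − 1 full chains, i.e., there exist chains D₁, …, D_{k−1} of subsets of [n], each of size n + 1, with F = D₁ ∪ ⋯ ∪ D_{k−1}. -/

import Mathlib

open Finset

/-- A family `F` of finite subsets of ℕ contains a `k`-antichain: there are `k` sets in `F`
that are pairwise incomparable under inclusion. -/
def ContainsAntichain (k : ℕ) (F : Finset (Finset ℕ)) : Prop :=
  ∃ S ⊆ F, S.card = k ∧ ∀ A ∈ S, ∀ B ∈ S, A ≠ B → ¬ A ⊆ B

/-- `F` is a `k`-antichain saturated family of subsets of `[n] = {1, …, n}`: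
all members are subsets of `[n]`, `F` contains no `k`-antichain, but adding any new
subset of `[n]` creates a `k`-antichain. -/
def IsAntichainSaturated (n k : ℕ) (F : Finset (Finset ℕ)) : Prop :=
  (∀ A ∈ F, A ⊆ Finset.Icc 1 n) ∧
  ¬ ContainsAntichain k F ∧
  ∀ X ⊆ Finset.Icc 1 n, X ∉ F → ContainsAntichain k (insert X F)

/-- A chain of subsets of `[n]`: a family of subsets of `[n]` totally ordered by inclusion. -/
def IsChainOfSubsets (n : ℕ) (D : Finset (Finset ℕ)) : Prop :=
  (∀ A ∈ D, A ⊆ Finset.Icc 1 n) ∧ ∀ A ∈ D, ∀ B ∈ D, A ⊆ B ∨ B ⊆ A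

/-- A full chain of subsets of `[n]`: a chain of size `n + 1`. -/
def IsFullChain (n : ℕ) (D : Finset (Finset ℕ)) : Prop :=
  IsChainOfSubsets n D ∧ D.card = n + 1

-- AUXILIARY DEVELOPMENT
/-- chain of finsets under inclusion -/
def IsChainF (E : Finset (Finset ℕ)) : Prop := ∀ a ∈ E, ∀ b ∈ E, a ⊆ b ∨ b ⊆ a

/-- antichain of finsets under inclusion -/
def IsAnti (S : Finset (Finset ℕ)) : Prop := ∀ a ∈ S, ∀ b ∈ S, a ≠ b → ¬ a ⊆ b

/-- A and B are joined by a saturated chain inside F -/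
def Linked (F : Finset (Finset ℕ)) (A B : Finset ℕ) : Prop :=
  ∃ S : Finset (Finset ℕ), S ⊆ F ∧ A ∈ S ∧ B ∈ S ∧ (∀ z ∈ S, A ⊆ z ∧ z ⊆ B) ∧
    IsChainF S ∧ ∀ s : ℕ, A.card ≤ s → s ≤ B.card → ∃ z ∈ S, z.card = s

lemma chain_subset_of_card_le {E : Finset (Finset ℕ)} (hE : IsChainF E)
    {x y : Finset ℕ} (hx : x ∈ E) (hy : y ∈ E) (h : x.card ≤ y.card) : x ⊆ y := by
  rcases hE x hx y hy with h1 | h1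
  · exact h1
  · exact (Finset.eq_of_subset_of_card_le h1 h) ▸ Finset.Subset.refl _

lemma anti_inter_chain {T E : Finset (Finset ℕ)} (hT : IsAnti T) (hE : IsChainF E) :
    (T ∩ E).card ≤ 1 := by
  by_contra h
  push_neg at h
  obtain ⟨x, hx, y, hy, hxy⟩ := Finset.one_lt_card.mp h
  rcases hE x (Finset.mem_of_mem_inter_right hx) y (Finset.mem_of_mem_inter_right hy) with h1 | h1
  · exact hT x (Finset.mem_of_mem_inter_left hx) y (Finset.mem_of_mem_inter_left hy) hxy h1
  · exact hT y (Finset.mem_of_mem_inter_left hy) x (Finset.mem_of_mem_inter_left hx) hxy.symm h1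

lemma cover_card_le (L : List (Finset (Finset ℕ))) :
    ∀ T : Finset (Finset ℕ), (∀ x ∈ T, ∃ E ∈ L, x ∈ E) →
      T.card ≤ (L.map (fun E => (T ∩ E).card)).sum := by
  induction L with
  | nil => intro T h; by_contra hc; push_neg at hc
           have hpos : 0 < T.card := by simpa using hc
           obtain ⟨x, hx⟩ := Finset.card_pos.mp hpos
           obtain ⟨E, hE, _⟩ := h x hx; exact absurd hE List.not_mem_nil
  | cons E0 L' ih =>
      intro T h
      have hsplit : T.card ≤ (T ∩ E0).card + (T \ E0).card := by
        rw [← Finset.card_inter_add_card_sdiff T E0]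
      have h2 : ∀ x ∈ T \ E0, ∃ E ∈ L', x ∈ E := by
        intro x hx
        obtain ⟨hxT, hxE0⟩ := Finset.mem_sdiff.mp hx
        obtain ⟨E, hE, hxE⟩ := h x hxT
        rcases List.mem_cons.mp hE with rfl | hE'
        · exact absurd hxE hxE0
        · exact ⟨E, hE', hxE⟩
      have h3 := ih (T \ E0) h2
      have h4 : (L'.map (fun E => ((T \ E0) ∩ E).card)).sum ≤
          (L'.map (fun E => (T ∩ E).card)).sum := by
        apply List.sum_le_sum
        intro E hE
        exact Finset.card_le_card (by
          intro x hx
          rcases Finset.mem_inter.mp hx with ⟨hx1, hx2⟩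
          exact Finset.mem_inter.mpr ⟨(Finset.mem_sdiff.mp hx1).1, hx2⟩)
      simp only [List.map_cons, List.sum_cons]
      omega

lemma ph {L : List (Finset (Finset ℕ))} {T : Finset (Finset ℕ)}
    (hcov : ∀ x ∈ T, ∃ E ∈ L, x ∈ E) (hch : ∀ E ∈ L, IsChainF E)
    (hanti : IsAnti T) (hlen : L.length ≤ T.card) :
    ∀ E ∈ L, (T ∩ E).Nonempty := by
  intro E hE
  rw [Finset.nonempty_iff_ne_empty]
  intro hemp
  obtain ⟨s, t, rfl⟩ := List.append_of_mem hE
  have h1 := cover_card_le (s ++ E :: t) T hcov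
  have hs : (s.map (fun E => (T ∩ E).card)).sum ≤ s.length := by
    apply le_trans (List.sum_le_card_nsmul _ 1 ?_) (by simp)
    intro x hx
    obtain ⟨E', hE', rfl⟩ := List.mem_map.mp hx
    exact anti_inter_chain hanti (hch E' (by simp [hE']))
  have ht : (t.map (fun E => (T ∩ E).card)).sum ≤ t.length := by
    apply le_trans (List.sum_le_card_nsmul _ 1 ?_) (by simp)
    intro x hx
    obtain ⟨E', hE', rfl⟩ := List.mem_map.mp hx
    exact anti_inter_chain hanti (hch E' (by simp [hE']))
  simp only [List.map_append, List.map_cons, List.sum_append, List.sum_cons, hemp,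
    Finset.card_empty, List.length_append, List.length_cons] at h1 hlen ⊢
  omega

lemma sat_witness {n k : ℕ} {F : Finset (Finset ℕ)} (hF : IsAntichainSaturated n k F)
    {X : Finset ℕ} (hX : X ⊆ Finset.Icc 1 n) (hXF : X ∉ F) :
    ∃ T ⊆ F, T.card = k - 1 ∧ IsAnti T ∧ ∀ C ∈ T, ¬ C ⊆ X ∧ ¬ X ⊆ C := by
  obtain ⟨S, hS, hcard, hanti⟩ := hF.2.2 X hX hXF
  have hXS : X ∈ S := by
    by_contra hXS
    exact hF.2.1 ⟨S, fun z hz => by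
      rcases Finset.mem_insert.mp (hS hz) with rfl | h
      · exact absurd hz hXS
      · exact h, hcard, hanti⟩
  refine ⟨S.erase X, ?_, ?_, ?_, ?_⟩
  · intro z hz
    have hz' := Finset.mem_erase.mp hz
    rcases Finset.mem_insert.mp (hS hz'.2) with h | h
    · exact absurd h hz'.1
    · exact h
  · rw [Finset.card_erase_of_mem hXS, hcard]
  · intro a ha b hb hab
    exact hanti a (Finset.mem_of_mem_erase ha) b (Finset.mem_of_mem_erase hb) hab
  · intro C hC
    have h1 := Finset.mem_erase.mp hC
    exact ⟨hanti C h1.2 X hXS h1.1, hanti X hXS C h1.2 (Ne.symm h1.1)⟩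

lemma no_big_anti {k : ℕ} {F : Finset (Finset ℕ)} (hno : ¬ ContainsAntichain k F)
    {S : Finset (Finset ℕ)} (hS : S ⊆ F) (hanti : IsAnti S) : S.card ≤ k - 1 := by
  by_contra h
  push_neg at h
  have hk : k ≤ S.card := by omega
  obtain ⟨T, hTS, hT⟩ := Finset.exists_subset_card_eq hk
  exact hno ⟨T, fun z hz => hS (hTS hz), hT,
    fun a ha b hb => hanti a (hTS ha) b (hTS hb)⟩

lemma empty_mem {n k : ℕ} {F : Finset (Finset ℕ)} (hk : 2 ≤ k)
    (hF : IsAntichainSaturated n k F) : ∅ ∈ F := by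
  by_contra h
  obtain ⟨T, hTF, hcard, _, hinc⟩ := sat_witness hF (Finset.empty_subset _) h
  have : 0 < T.card := by omega
  obtain ⟨C, hC⟩ := Finset.card_pos.mp this
  exact (hinc C hC).2 (Finset.empty_subset C)

lemma icc_mem {n k : ℕ} {F : Finset (Finset ℕ)} (hk : 2 ≤ k)
    (hF : IsAntichainSaturated n k F) : Finset.Icc 1 n ∈ F := by
  by_contra h
  obtain ⟨T, hTF, hcard, _, hinc⟩ := sat_witness hF (Finset.Subset.refl _) h
  have : 0 < T.card := by omega
  obtain ⟨C, hC⟩ := Finset.card_pos.mp this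
  exact (hinc C hC).1 (hF.1 C (hTF hC))

lemma linked_refl {F : Finset (Finset ℕ)} {A : Finset ℕ} (hA : A ∈ F) : Linked F A A := by
  refine ⟨{A}, by simpa using hA, Finset.mem_singleton_self A, Finset.mem_singleton_self A,
    ?_, ?_, ?_⟩
  · intro z hz; rw [Finset.mem_singleton] at hz; subst hz; exact ⟨Finset.Subset.refl _, Finset.Subset.refl _⟩
  · intro a ha b hb; rw [Finset.mem_singleton] at ha hb; subst ha; subst hb; left; rfl
  · intro s h1 h2
    exact ⟨A, Finset.mem_singleton_self A, le_antisymm h2 h1 ▸ rfl⟩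

lemma linked_step {F : Finset (Finset ℕ)} {A B : Finset ℕ} (hA : A ∈ F) (hB : B ∈ F)
    (hAB : A ⊆ B) (hcard : B.card ≤ A.card + 1) : Linked F A B := by
  refine ⟨{A, B}, ?_, by simp, by simp, ?_, ?_, ?_⟩
  · intro z hz; rcases Finset.mem_insert.mp hz with rfl | hz
    · exact hA
    · rw [Finset.mem_singleton] at hz; subst hz; exact hB
  · intro z hz; rcases Finset.mem_insert.mp hz with rfl | hz
    · exact ⟨Finset.Subset.refl _, hAB⟩
    · rw [Finset.mem_singleton] at hz; subst hz; exact ⟨hAB, Finset.Subset.refl _⟩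
  · intro a ha b hb
    have ha' : a = A ∨ a = B := by simpa using ha
    have hb' : b = A ∨ b = B := by simpa using hb
    rcases ha' with rfl | rfl <;> rcases hb' with rfl | rfl
    · left; exact Finset.Subset.refl _
    · left; exact hAB
    · right; exact hAB
    · left; exact Finset.Subset.refl _
  · intro s h1 h2
    have hle : A.card ≤ B.card := Finset.card_le_card hAB
    rcases Nat.eq_or_lt_of_le h1 with h | h
    · exact ⟨A, by simp, h⟩
    · exact ⟨B, by simp, by omega⟩

lemma linked_trans {F : Finset (Finset ℕ)} {A B C : Finset ℕ}
    (h1 : Linked F A B) (h2 : Linked F B C) : Linked F A C := by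
  obtain ⟨S1, hS1F, hA1, hB1, hbd1, hch1, hsz1⟩ := h1
  obtain ⟨S2, hS2F, hB2, hC2, hbd2, hch2, hsz2⟩ := h2
  have hAB : A ⊆ B := (hbd1 B hB1).1
  have hBC : B ⊆ C := (hbd2 C hC2).1
  refine ⟨S1 ∪ S2, ?_, ?_, ?_, ?_, ?_, ?_⟩
  · intro z hz; rcases Finset.mem_union.mp hz with h | h
    · exact hS1F h
    · exact hS2F h
  · exact Finset.mem_union_left _ hA1
  · exact Finset.mem_union_right _ hC2
  · intro z hz; rcases Finset.mem_union.mp hz with h | h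
    · exact ⟨(hbd1 z h).1, (hbd1 z h).2.trans hBC⟩
    · exact ⟨hAB.trans (hbd2 z h).1, (hbd2 z h).2⟩
  · intro a ha b hb
    rcases Finset.mem_union.mp ha with ha' | ha' <;> rcases Finset.mem_union.mp hb with hb' | hb'
    · exact hch1 a ha' b hb'
    · left; exact (hbd1 a ha').2.trans (hbd2 b hb').1
    · right; exact (hbd1 b hb').2.trans (hbd2 a ha').1
    · exact hch2 a ha' b hb'
  · intro s hs1 hs2
    by_cases h : s ≤ B.card
    · obtain ⟨z, hz, hzc⟩ := hsz1 s hs1 h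
      exact ⟨z, Finset.mem_union_left _ hz, hzc⟩
    · obtain ⟨z, hz, hzc⟩ := hsz2 s (by omega) hs2
      exact ⟨z, Finset.mem_union_right _ hz, hzc⟩

lemma dilworth : ∀ (N : ℕ) (P : Finset (Finset ℕ)), P.card ≤ N → ∀ m : ℕ,
    (∀ S ⊆ P, IsAnti S → S.card ≤ m) →
    ∃ L : List (Finset (Finset ℕ)), L.length ≤ m ∧ (∀ E ∈ L, IsChainF E ∧ E ⊆ P) ∧
      List.Pairwise Disjoint L ∧ ∀ A ∈ P, ∃ E ∈ L, A ∈ E := by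
  intro N
  induction N with
  | zero =>
      intro P hP m _
      have : P = ∅ := Finset.card_eq_zero.mp (le_antisymm hP (Nat.zero_le _))
      subst this
      exact ⟨[], by simp, by simp, by simp, by simp⟩
  | succ N ih =>
      intro P hP m hw
      classical
      by_cases hPne : P = ∅
      · subst hPne; exact ⟨[], by simp, by simp, by simp, by simp⟩
      obtain ⟨a, haP, hamax⟩ := Finset.exists_max_image P Finset.card
        (Finset.nonempty_iff_ne_empty.mpr hPne)
      set P' := P.erase a with hP'def
      have hP'card : P'.card ≤ N := by
        have h1 : P'.card = P.card - 1 := Finset.card_erase_of_mem haP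
        have hPpos : 1 ≤ P.card := Finset.card_pos.mpr ⟨a, haP⟩
        omega
      have hP'P : P' ⊆ P := Finset.erase_subset a P
      have haP' : a ∉ P' := Finset.notMem_erase a P
      set W := ((P'.powerset).filter IsAnti).sup Finset.card with hWdef
      have w1 : ∀ S ⊆ P', IsAnti S → S.card ≤ W := by
        intro S hS hanti
        exact Finset.le_sup (Finset.mem_filter.mpr ⟨Finset.mem_powerset.mpr hS, hanti⟩)
      have w2 : ∃ T0 ⊆ P', IsAnti T0 ∧ T0.card = W := by
        obtain ⟨T0, hT0, heq⟩ := Finset.exists_mem_eq_sup ((P'.powerset).filter IsAnti)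
          ⟨∅, Finset.mem_filter.mpr ⟨Finset.mem_powerset.mpr (Finset.empty_subset _),
            fun x hx => absurd hx (Finset.notMem_empty x)⟩⟩ Finset.card
        have h1 := Finset.mem_filter.mp hT0
        exact ⟨T0, Finset.mem_powerset.mp h1.1, h1.2, heq.symm⟩
      obtain ⟨T0, hT0P', hT0anti, hT0card⟩ := w2
      by_cases hc : ∃ S ⊆ P, IsAnti S ∧ W + 1 ≤ S.card
      · -- case 1
        obtain ⟨S, hSP, hSanti, hScard⟩ := hc
        have hWm : W + 1 ≤ m := le_trans hScard (hw S hSP hSanti)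
        obtain ⟨L', hL'len, hL'props, hL'disj, hL'cov⟩ := ih P' hP'card (m - 1)
          (fun S hS hanti => le_trans (w1 S hS hanti) (by omega))
        refine ⟨{a} :: L', by simp; omega, ?_, ?_, ?_⟩
        · intro E hE
          rcases List.mem_cons.mp hE with rfl | hE'
          · exact ⟨fun x hx y hy => by
              rw [Finset.mem_singleton] at hx hy; subst hx; subst hy; left; exact Finset.Subset.refl _,
              by simpa using haP⟩
          · exact ⟨(hL'props E hE').1, (hL'props E hE').2.trans hP'P⟩
        · refine List.pairwise_cons.mpr ⟨?_, hL'disj⟩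
          intro E hE
          rw [Finset.disjoint_left]
          intro x hx
          rw [Finset.mem_singleton] at hx; subst hx
          intro hxE
          exact haP' ((hL'props _ hE).2 hxE)
        · intro A hA
          by_cases hAa : A = a
          · exact ⟨{a}, by simp, by simp [hAa]⟩
          · obtain ⟨E, hE, hAE⟩ := hL'cov A (Finset.mem_erase.mpr ⟨hAa, hA⟩)
            exact ⟨E, by simp [hE], hAE⟩
      · -- case 2
        push_neg at hc
        have hc' : ∀ S ⊆ P, IsAnti S → S.card ≤ W := fun S hS hanti => by
          have := hc S hS hanti; omega
        have hW1 : 1 ≤ W := by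
          have : ({a} : Finset (Finset ℕ)).card ≤ W := hc' {a} (by simpa using haP)
            (fun x hx y hy hxy => by
              rw [Finset.mem_singleton] at hx hy; subst hx; subst hy; exact absurd rfl hxy)
          simpa using this
        have hWm : W ≤ m := le_trans (hT0card ▸ hw T0 (hT0P'.trans hP'P) hT0anti) le_rfl
        obtain ⟨LC, hLClen, hLCprops, hLCdisj, hLCcov⟩ := ih P' hP'card W w1
        have hLCdisj' : ∀ E ∈ LC, ∀ E' ∈ LC, E ≠ E' → Disjoint E E' :=
          fun E hE E' hE' hne => (haveI : Std.Symm (α := Finset (Finset ℕ)) Disjoint := ⟨fun x y h => Disjoint.symm h⟩; hLCdisj.forall) hE hE' hne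
        -- pigeonhole
        have hPH : ∀ T ⊆ P', IsAnti T → T.card = W → ∀ E ∈ LC, (T ∩ E).Nonempty := by
          intro T hTP' hTanti hTcard E hE
          exact ph (fun x hx => hLCcov x (hTP' hx)) (fun E' hE' => (hLCprops E' hE').1)
            hTanti (by omega) E hE
        set SE : Finset (Finset ℕ) → Finset (Finset ℕ) :=
          fun E => E.filter (fun x => ∃ T ⊆ P', IsAnti T ∧ T.card = W ∧ x ∈ T) with hSEdef
        have hSEsub : ∀ E, SE E ⊆ E := fun E => Finset.filter_subset _ _
        have hSEne : ∀ E ∈ LC, (SE E).Nonempty := by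
          intro E hE
          obtain ⟨b, hb⟩ := hPH T0 hT0P' hT0anti hT0card E hE
          rw [Finset.mem_inter] at hb
          exact ⟨b, Finset.mem_filter.mpr ⟨hb.2, T0, hT0P', hT0anti, hT0card, hb.1⟩⟩
        have hex : ∀ E ∈ LC, ∃ b, b ∈ SE E ∧ ∀ x ∈ SE E, x.card ≤ b.card := by
          intro E hE
          obtain ⟨b, hb1, hb2⟩ := Finset.exists_max_image (SE E) Finset.card (hSEne E hE)
          exact ⟨b, hb1, hb2⟩
        choose! aE haE1 haE2 using hex
        have haEmem : ∀ E ∈ LC, aE E ∈ E := fun E hE => hSEsub E (haE1 E hE)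
        have haEP' : ∀ E ∈ LC, aE E ∈ P' := fun E hE => (hLCprops E hE).2 (haEmem E hE)
        have hsubaE : ∀ E ∈ LC, ∀ x ∈ SE E, x ⊆ aE E := by
          intro E hE x hx
          exact chain_subset_of_card_le (hLCprops E hE).1 (hSEsub E hx) (haEmem E hE)
            (haE2 E hE x hx)
        have hLCnodup : LC.Nodup := by
          rw [List.Nodup]
          rw [List.pairwise_iff_get] at hLCdisj ⊢
          intro i j hij
          intro heq
          have hdisj := hLCdisj i j hij
          rw [heq] at hdisj
          have hemp : LC.get j = ∅ := by
            simpa using (Finset.disjoint_self_iff_empty _).mp hdisj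
          have hne := hSEne (LC.get j) (LC.get_mem j)
          obtain ⟨b, hb⟩ := hne
          have : b ∈ LC.get j := hSEsub _ hb
          rw [hemp] at this
          exact absurd this (Finset.notMem_empty b)
        have hmapnodup : (LC.map aE).Nodup := by
          apply List.Nodup.map_on ?_ hLCnodup
          intro E hE E' hE' heq
          by_contra hne
          have hdisj := hLCdisj' E hE E' hE' hne
          rw [Finset.disjoint_left] at hdisj
          exact hdisj (haEmem E hE) (heq ▸ haEmem E' hE')
        have hWlen : W ≤ LC.length := by
          have h1 := cover_card_le LC T0 (fun x hx => hLCcov x (hT0P' hx))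
          have h2 : (LC.map (fun E => (T0 ∩ E).card)).sum ≤ LC.length := by
            apply le_trans (List.sum_le_card_nsmul _ 1 ?_) (by simp)
            intro x hx
            obtain ⟨E', hE', rfl⟩ := List.mem_map.mp hx
            exact anti_inter_chain hT0anti (hLCprops E' hE').1
          omega
        -- key claim
        have key : ∃ E ∈ LC, aE E ⊆ a ∧ aE E ≠ a := by
          by_contra hno
          push_neg at hno
          have hnosub : ∀ E ∈ LC, ¬ aE E ⊆ a := by
            intro E hE hsub
            exact haP' ((hno E hE hsub) ▸ haEP' E hE)
          have hnosub2 : ∀ E ∈ LC, ¬ a ⊆ aE E := by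
            intro E hE hsub
            have : a = aE E := Finset.eq_of_subset_of_card_le hsub
              (hamax (aE E) (hP'P (haEP' E hE)))
            exact haP' (this ▸ haEP' E hE)
          have hamem : a ∉ (LC.map aE).toFinset := by
            rw [List.mem_toFinset]
            intro hmem
            obtain ⟨E, hE, heq⟩ := List.mem_map.mp hmem
            exact haP' (heq ▸ haEP' E hE)
          set Tstar := insert a (LC.map aE).toFinset with hTstardef
          have hTstarcard : Tstar.card = LC.length + 1 := by
            rw [hTstardef, Finset.card_insert_of_notMem hamem,
              List.toFinset_card_of_nodup hmapnodup, List.length_map]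
          have hmemchar : ∀ x ∈ Tstar, x = a ∨ ∃ E ∈ LC, x = aE E := by
            intro x hx
            rcases Finset.mem_insert.mp hx with rfl | hx'
            · left; rfl
            · right
              obtain ⟨E, hE, heq⟩ := List.mem_map.mp (List.mem_toFinset.mp hx')
              exact ⟨E, hE, heq.symm⟩
          have hTstarP : Tstar ⊆ P := by
            intro x hx
            rcases hmemchar x hx with rfl | ⟨E, hE, rfl⟩
            · exact haP
            · exact hP'P (haEP' E hE)
          have hTstaranti : IsAnti Tstar := by
            intro x hx y hy hxy hsub
            rcases hmemchar x hx with rfl | ⟨E, hE, rfl⟩ <;>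
              rcases hmemchar y hy with h | ⟨E', hE', rfl⟩
            · exact hxy h.symm
            · exact hnosub2 E' hE' hsub
            · subst h; exact hnosub E hE hsub
            · -- aE E ⊆ aE E', distinct
              have hEE' : E ≠ E' := by
                intro h; subst h; exact hxy rfl
              have h1 := Finset.mem_filter.mp (haE1 E' hE')
              obtain ⟨_, T', hT'P', hT'anti, hT'card, hmemT'⟩ := h1
              obtain ⟨b, hb⟩ := hPH T' hT'P' hT'anti hT'card E hE
              rw [Finset.mem_inter] at hb
              have hbS : b ∈ SE E := Finset.mem_filter.mpr ⟨hb.2, T', hT'P', hT'anti, hT'card, hb.1⟩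
              have hbsub : b ⊆ aE E' := (hsubaE E hE b hbS).trans hsub
              have hbeq : b = aE E' := by
                by_contra hbne
                exact hT'anti b hb.1 (aE E') hmemT' hbne hbsub
              have hdisj := hLCdisj' E hE E' hE' hEE'
              rw [Finset.disjoint_left] at hdisj
              exact hdisj hb.2 (hbeq ▸ haEmem E' hE')
          have := hc' Tstar hTstarP hTstaranti
          omega
        obtain ⟨E0, hE0, hsub0, hne0⟩ := key
        set K := insert a (E0.filter (fun x => x ⊆ aE E0)) with hKdef
        have hsubK : ∀ x ∈ E0, x ⊆ aE E0 → x ∈ K := by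
          intro x hx hxs
          exact Finset.mem_insert_of_mem (Finset.mem_filter.mpr ⟨hx, hxs⟩)
        have hKchar : ∀ x ∈ K, x = a ∨ (x ∈ E0 ∧ x ⊆ aE E0) := by
          intro x hx
          rcases Finset.mem_insert.mp hx with rfl | hx'
          · left; rfl
          · right; exact ⟨(Finset.mem_filter.mp hx').1, (Finset.mem_filter.mp hx').2⟩
        have hKchain : IsChainF K := by
          intro x hx y hy
          have haEa : aE E0 ⊆ a := hsub0
          rcases hKchar x hx with rfl | ⟨hxE, hxs⟩ <;> rcases hKchar y hy with h | ⟨hyE, hys⟩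
          · subst h; left; exact Finset.Subset.refl _
          · right; exact hys.trans haEa
          · subst h; left; exact hxs.trans haEa
          · exact (hLCprops E0 hE0).1 x hxE y hyE
        have hKP : K ⊆ P := by
          intro x hx
          rcases hKchar x hx with rfl | ⟨hxE, _⟩
          · exact haP
          · exact hP'P ((hLCprops E0 hE0).2 hxE)
        have hPKsub : P \ K ⊆ P' := by
          intro x hx
          rw [Finset.mem_sdiff] at hx
          refine Finset.mem_erase.mpr ⟨?_, hx.1⟩
          intro h; subst h
          exact hx.2 (Finset.mem_insert_self _ _)
        have hPKcard : (P \ K).card ≤ N := by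
          have h1 : (P \ K).card ≤ P'.card := Finset.card_le_card hPKsub
          omega
        have hwK : ∀ S ⊆ P \ K, IsAnti S → S.card ≤ W - 1 := by
          intro S hS hanti
          by_contra hbig
          push_neg at hbig
          have hWle : W ≤ S.card := by omega
          obtain ⟨T, hTS, hTcard⟩ := Finset.exists_subset_card_eq hWle
          have hTanti : IsAnti T := fun x hx y hy => hanti x (hTS hx) y (hTS hy)
          have hTP' : T ⊆ P' := fun x hx => hPKsub (hS (hTS hx))
          obtain ⟨b, hb⟩ := hPH T hTP' hTanti hTcard E0 hE0
          rw [Finset.mem_inter] at hb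
          have hbS : b ∈ SE E0 := Finset.mem_filter.mpr ⟨hb.2, T, hTP', hTanti, hTcard, hb.1⟩
          have hbK : b ∈ K := hsubK b hb.2 (hsubaE E0 hE0 b hbS)
          have := hS (hTS hb.1)
          rw [Finset.mem_sdiff] at this
          exact this.2 hbK
        obtain ⟨L'', hL''len, hL''props, hL''disj, hL''cov⟩ := ih (P \ K) hPKcard (W - 1) hwK
        refine ⟨K :: L'', by simp; omega, ?_, ?_, ?_⟩
        · intro E hE
          rcases List.mem_cons.mp hE with rfl | hE'
          · exact ⟨hKchain, hKP⟩
          · exact ⟨(hL''props E hE').1, fun x hx => (Finset.mem_sdiff.mp ((hL''props E hE').2 hx)).1⟩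
        · refine List.pairwise_cons.mpr ⟨?_, hL''disj⟩
          intro E hE
          rw [Finset.disjoint_left]
          intro x hxK hxE
          exact (Finset.mem_sdiff.mp ((hL''props E hE).2 hxE)).2 hxK
        · intro A hA
          by_cases hAK : A ∈ K
          · exact ⟨K, by simp, hAK⟩
          · obtain ⟨E, hE, hAE⟩ := hL''cov A (Finset.mem_sdiff.mpr ⟨hA, hAK⟩)
            exact ⟨E, by simp [hE], hAE⟩

lemma consecutive_linked {n k : ℕ} (hk : 2 ≤ k) {F : Finset (Finset ℕ)}
    (hF : IsAntichainSaturated n k F) :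
    ∀ g : ℕ, ∀ L : List (Finset (Finset ℕ)), L.length = k - 1 →
      (∀ E ∈ L, IsChainF E ∧ E ⊆ F) → (∀ A ∈ F, ∃ E ∈ L, A ∈ E) →
      ∀ E ∈ L, ∀ A ∈ E, ∀ B ∈ E, A ⊆ B → B.card ≤ A.card + g →
      (∀ z ∈ E, A ⊂ z → z ⊂ B → False) → Linked F A B := by
  intro g
  induction g with
  | zero =>
      intro L hlen hprops hcov E hE A hA B hB hAB hcard hcons
      have : A = B := Finset.eq_of_subset_of_card_le hAB (by omega)
      subst this
      exact linked_refl ((hprops E hE).2 hA)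
  | succ g ihg =>
      intro L hlen hprops hcov E hE A hA B hB hAB hcard hcons
      classical
      have hEchain := (hprops E hE).1
      have hEF := (hprops E hE).2
      have hAF : A ∈ F := hEF hA
      have hBF : B ∈ F := hEF hB
      by_cases hstep : B.card ≤ A.card + 1
      · exact linked_step hAF hBF hAB hstep
      push_neg at hstep
      set I := F.filter (fun z => A ⊂ z ∧ z ⊂ B) with hIdef
      by_cases hI : I.Nonempty
      · -- surgery case
        obtain ⟨C, hC⟩ := hI
        rw [Finset.mem_filter] at hC
        obtain ⟨hCF, hAC, hCB⟩ := hC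
        have hCE : C ∉ E := fun h => hcons C h hAC hCB
        obtain ⟨Ej, hEj, hCEj⟩ := hcov C hCF
        have hEjne : Ej ≠ E := fun h => hCE (h ▸ hCEj)
        have hEjchain := (hprops Ej hEj).1
        have hEjF := (hprops Ej hEj).2
        have hrest : ∀ E'' ∈ (L.erase E).erase Ej, E'' ∈ L :=
          fun E'' h => List.mem_of_mem_erase (List.mem_of_mem_erase h)
        have h2le : 2 ≤ k - 1 := by
          have h1 : Ej ∈ L.erase E := (List.mem_erase_of_ne hEjne).mpr hEj
          have h2 : 0 < (L.erase E).length := List.length_pos_iff.mpr (List.ne_nil_of_mem h1)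
          have h3 := List.length_erase_of_mem hE
          omega
        have hlenrest : ((L.erase E).erase Ej).length = k - 1 - 2 := by
          rw [List.length_erase_of_mem ((List.mem_erase_of_ne hEjne).mpr hEj),
            List.length_erase_of_mem hE, hlen]
          omega
        -- dichotomy in E relative to A, B (consecutive)
        have hEdich : ∀ w ∈ E, ¬ w ⊆ A → B ⊆ w := by
          intro w hw hwA
          have h1 := hEchain w hw A hA
          have h2 := hEchain w hw B hB
          have hAw : A ⊂ w := by
            rcases h1 with h | h
            · exact absurd h hwA
            · exact ⟨h, fun hc => hwA (le_antisymm hc h).le⟩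
          rcases h2 with h | h
          · by_cases hwB : w = B
            · exact hwB ▸ Finset.Subset.refl _
            · exact absurd (hcons w hw hAw ⟨h, fun hc => hwB (le_antisymm h hc)⟩) not_false
          · exact h
        -- surgery 1 : make A, C consecutive
        have hlink1 : Linked F A C := by
          set E1 := E.filter (fun x => x ⊆ A) ∪ Ej.filter (fun z => C ⊆ z) with hE1def
          set Ej1 := E.filter (fun x => ¬ x ⊆ A) ∪ Ej.filter (fun z => ¬ C ⊆ z) with hEj1def
          set L1 := E1 :: Ej1 :: (L.erase E).erase Ej with hL1def
          have hmem1 : ∀ x ∈ E1, (x ∈ E ∧ x ⊆ A) ∨ (x ∈ Ej ∧ C ⊆ x) := by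
            intro x hx
            rcases Finset.mem_union.mp hx with h | h
            · left; exact ⟨(Finset.mem_filter.mp h).1, (Finset.mem_filter.mp h).2⟩
            · right; exact ⟨(Finset.mem_filter.mp h).1, (Finset.mem_filter.mp h).2⟩
          have hmem2 : ∀ x ∈ Ej1, (x ∈ E ∧ ¬ x ⊆ A) ∨ (x ∈ Ej ∧ ¬ C ⊆ x) := by
            intro x hx
            rcases Finset.mem_union.mp hx with h | h
            · left; exact ⟨(Finset.mem_filter.mp h).1, (Finset.mem_filter.mp h).2⟩
            · right; exact ⟨(Finset.mem_filter.mp h).1, (Finset.mem_filter.mp h).2⟩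
          have hL1len : L1.length = k - 1 := by
            simp only [hL1def, List.length_cons, hlenrest]; omega
          apply ihg L1 hL1len ?_ ?_ E1 (by simp [hL1def])
            A (Finset.mem_union_left _ (Finset.mem_filter.mpr ⟨hA, Finset.Subset.refl _⟩))
            C (Finset.mem_union_right _ (Finset.mem_filter.mpr ⟨hCEj, Finset.Subset.refl _⟩))
            hAC.1 ?_ ?_
          · -- chains and ⊆ F
            intro E'' hE''
            rcases List.mem_cons.mp hE'' with rfl | hE''
            · constructor
              · intro x hx y hy
                rcases hmem1 x hx with ⟨hx1, hx2⟩ | ⟨hx1, hx2⟩ <;>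
                  rcases hmem1 y hy with ⟨hy1, hy2⟩ | ⟨hy1, hy2⟩
                · exact hEchain x hx1 y hy1
                · left; exact hx2.trans (hAC.1.trans hy2)
                · right; exact hy2.trans (hAC.1.trans hx2)
                · exact hEjchain x hx1 y hy1
              · intro x hx
                rcases hmem1 x hx with ⟨hx1, _⟩ | ⟨hx1, _⟩
                · exact hEF hx1
                · exact hEjF hx1
            rcases List.mem_cons.mp hE'' with rfl | hE''
            · constructor
              · intro x hx y hy
                have hkey : ∀ z ∈ Ej1, (z ∈ E ∧ B ⊆ z) ∨ (z ∈ Ej ∧ z ⊂ C) := by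
                  intro z hz
                  rcases hmem2 z hz with ⟨hz1, hz2⟩ | ⟨hz1, hz2⟩
                  · left; exact ⟨hz1, hEdich z hz1 hz2⟩
                  · right
                    refine ⟨hz1, ?_, fun hc => hz2 hc⟩
                    rcases hEjchain z hz1 C hCEj with h | h
                    · exact h
                    · exact absurd h hz2
                rcases hkey x hx with ⟨hx1, hx2⟩ | ⟨hx1, hx2⟩ <;>
                  rcases hkey y hy with ⟨hy1, hy2⟩ | ⟨hy1, hy2⟩
                · exact hEchain x hx1 y hy1
                · right; exact hy2.1.trans (hCB.1.trans hx2)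
                · left; exact hx2.1.trans (hCB.1.trans hy2)
                · exact hEjchain x hx1 y hy1
              · intro x hx
                rcases hmem2 x hx with ⟨hx1, _⟩ | ⟨hx1, _⟩
                · exact hEF hx1
                · exact hEjF hx1
            · exact hprops E'' (hrest E'' hE'')
          · -- cover
            intro z hz
            obtain ⟨E'', hE''L, hzE''⟩ := hcov z hz
            rcases eq_or_ne E'' E with rfl | hne1
            · by_cases hzA : z ⊆ A
              · exact ⟨E1, by simp [hL1def], Finset.mem_union_left _ (Finset.mem_filter.mpr ⟨hzE'', hzA⟩)⟩
              · exact ⟨Ej1, by simp [hL1def], Finset.mem_union_left _ (Finset.mem_filter.mpr ⟨hzE'', hzA⟩)⟩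
            rcases eq_or_ne E'' Ej with rfl | hne2
            · by_cases hzC : C ⊆ z
              · exact ⟨E1, by simp [hL1def], Finset.mem_union_right _ (Finset.mem_filter.mpr ⟨hzE'', hzC⟩)⟩
              · exact ⟨Ej1, by simp [hL1def], Finset.mem_union_right _ (Finset.mem_filter.mpr ⟨hzE'', hzC⟩)⟩
            · refine ⟨E'', ?_, hzE''⟩
              simp only [hL1def, List.mem_cons]
              right; right
              exact (List.mem_erase_of_ne hne2).mpr ((List.mem_erase_of_ne hne1).mpr hE''L)
          · -- card bound
            have h1 : C.card < B.card := Finset.card_lt_card hCB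
            have h2 : A.card < C.card := Finset.card_lt_card hAC
            omega
          · -- consecutive
            intro z hz hAz hzC
            rcases hmem1 z hz with ⟨_, hz2⟩ | ⟨_, hz2⟩
            · exact hAz.not_subset hz2
            · exact hzC.not_subset hz2
        have hlink2 : Linked F C B := by
          set E2 := E.filter (fun x => B ⊆ x) ∪ Ej.filter (fun z => z ⊆ C) with hE2def
          set Ej2 := E.filter (fun x => ¬ B ⊆ x) ∪ Ej.filter (fun z => ¬ z ⊆ C) with hEj2def
          set L2 := E2 :: Ej2 :: (L.erase E).erase Ej with hL2def
          have hmem1 : ∀ x ∈ E2, (x ∈ E ∧ B ⊆ x) ∨ (x ∈ Ej ∧ x ⊆ C) := by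
            intro x hx
            rcases Finset.mem_union.mp hx with h | h
            · left; exact ⟨(Finset.mem_filter.mp h).1, (Finset.mem_filter.mp h).2⟩
            · right; exact ⟨(Finset.mem_filter.mp h).1, (Finset.mem_filter.mp h).2⟩
          have hmem2 : ∀ x ∈ Ej2, (x ∈ E ∧ ¬ B ⊆ x) ∨ (x ∈ Ej ∧ ¬ x ⊆ C) := by
            intro x hx
            rcases Finset.mem_union.mp hx with h | h
            · left; exact ⟨(Finset.mem_filter.mp h).1, (Finset.mem_filter.mp h).2⟩
            · right; exact ⟨(Finset.mem_filter.mp h).1, (Finset.mem_filter.mp h).2⟩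
          have hL2len : L2.length = k - 1 := by
            simp only [hL2def, List.length_cons, hlenrest]; omega
          apply ihg L2 hL2len ?_ ?_ E2 (by simp [hL2def])
            C (Finset.mem_union_right _ (Finset.mem_filter.mpr ⟨hCEj, Finset.Subset.refl _⟩))
            B (Finset.mem_union_left _ (Finset.mem_filter.mpr ⟨hB, Finset.Subset.refl _⟩))
            hCB.1 ?_ ?_
          · -- chains and ⊆ F
            intro E'' hE''
            rcases List.mem_cons.mp hE'' with rfl | hE''
            · constructor
              · intro x hx y hy
                rcases hmem1 x hx with ⟨hx1, hx2⟩ | ⟨hx1, hx2⟩ <;>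
                  rcases hmem1 y hy with ⟨hy1, hy2⟩ | ⟨hy1, hy2⟩
                · exact hEchain x hx1 y hy1
                · right; exact hy2.trans (hCB.1.trans hx2)
                · left; exact hx2.trans (hCB.1.trans hy2)
                · exact hEjchain x hx1 y hy1
              · intro x hx
                rcases hmem1 x hx with ⟨hx1, _⟩ | ⟨hx1, _⟩
                · exact hEF hx1
                · exact hEjF hx1
            rcases List.mem_cons.mp hE'' with rfl | hE''
            · constructor
              · intro x hx y hy
                have hkey : ∀ z ∈ Ej2, (z ∈ E ∧ z ⊆ A) ∨ (z ∈ Ej ∧ C ⊂ z) := by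
                  intro z hz
                  rcases hmem2 z hz with ⟨hz1, hz2⟩ | ⟨hz1, hz2⟩
                  · left
                    refine ⟨hz1, ?_⟩
                    by_contra hzA
                    exact hz2 (hEdich z hz1 hzA)
                  · right
                    refine ⟨hz1, ?_, fun hc => hz2 hc⟩
                    rcases hEjchain C hCEj z hz1 with h | h
                    · exact h
                    · exact absurd h hz2
                rcases hkey x hx with ⟨hx1, hx2⟩ | ⟨hx1, hx2⟩ <;>
                  rcases hkey y hy with ⟨hy1, hy2⟩ | ⟨hy1, hy2⟩
                · exact hEchain x hx1 y hy1
                · left; exact hx2.trans (hAC.1.trans hy2.1)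
                · right; exact hy2.trans (hAC.1.trans hx2.1)
                · exact hEjchain x hx1 y hy1
              · intro x hx
                rcases hmem2 x hx with ⟨hx1, _⟩ | ⟨hx1, _⟩
                · exact hEF hx1
                · exact hEjF hx1
            · exact hprops E'' (hrest E'' hE'')
          · -- cover
            intro z hz
            obtain ⟨E'', hE''L, hzE''⟩ := hcov z hz
            rcases eq_or_ne E'' E with rfl | hne1
            · by_cases hzB : B ⊆ z
              · exact ⟨E2, by simp [hL2def], Finset.mem_union_left _ (Finset.mem_filter.mpr ⟨hzE'', hzB⟩)⟩
              · exact ⟨Ej2, by simp [hL2def], Finset.mem_union_left _ (Finset.mem_filter.mpr ⟨hzE'', hzB⟩)⟩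
            rcases eq_or_ne E'' Ej with rfl | hne2
            · by_cases hzC : z ⊆ C
              · exact ⟨E2, by simp [hL2def], Finset.mem_union_right _ (Finset.mem_filter.mpr ⟨hzE'', hzC⟩)⟩
              · exact ⟨Ej2, by simp [hL2def], Finset.mem_union_right _ (Finset.mem_filter.mpr ⟨hzE'', hzC⟩)⟩
            · refine ⟨E'', ?_, hzE''⟩
              simp only [hL2def, List.mem_cons]
              right; right
              exact (List.mem_erase_of_ne hne2).mpr ((List.mem_erase_of_ne hne1).mpr hE''L)
          · -- card bound
            have h2 : A.card < C.card := Finset.card_lt_card hAC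
            omega
          · -- consecutive
            intro z hz hCz hzB
            rcases hmem1 z hz with ⟨_, hz2⟩ | ⟨_, hz2⟩
            · exact hzB.not_subset hz2
            · exact hCz.not_subset hz2
        exact linked_trans hlink1 hlink2
      · -- interval empty: contradiction via saturation
        exfalso
        have hBA : (B \ A).Nonempty := by
          rw [← Finset.card_pos, Finset.card_sdiff_of_subset hAB]
          omega
        obtain ⟨x, hx⟩ := hBA
        rw [Finset.mem_sdiff] at hx
        set X := insert x A with hXdef
        have hXcard : X.card = A.card + 1 := Finset.card_insert_of_notMem hx.2
        have hAX : A ⊂ X := Finset.ssubset_insert hx.2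
        have hXB : X ⊆ B := Finset.insert_subset hx.1 hAB
        have hXBs : X ⊂ B := ⟨hXB, fun hc => by
          have := Finset.card_le_card hc
          omega⟩
        have hXF : X ∉ F := by
          intro hXF
          exact hI ⟨X, Finset.mem_filter.mpr ⟨hXF, hAX, hXBs⟩⟩
        obtain ⟨T, hTF, hTcard, hTanti, hTinc⟩ := sat_witness hF (hXB.trans (hF.1 B hBF)) hXF
        obtain ⟨C1, hC1⟩ := ph (fun z hz => hcov z (hTF hz)) (fun E' hE' => (hprops E' hE').1)
          hTanti (by omega) E hE
        rw [Finset.mem_inter] at hC1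
        obtain ⟨hC1T, hC1E⟩ := hC1
        have hincX := hTinc C1 hC1T
        rcases hEchain C1 hC1E A hA with h1 | h1
        · exact hincX.1 (h1.trans hAX.1)
        rcases hEchain B hB C1 hC1E with h2 | h2
        · exact hincX.2 (hXB.trans h2)
        · -- A ⊆ C1 ⊆ B
          have hne1 : C1 ≠ A := fun hc => hincX.1 (hc ▸ hAX.1)
          have hne2 : C1 ≠ B := fun hc => hincX.2 (hc ▸ hXB)
          exact hcons C1 hC1E ⟨h1, fun hc => hne1 (Finset.Subset.antisymm hc h1)⟩
            ⟨h2, fun hc => hne2 (Finset.Subset.antisymm h2 hc)⟩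

lemma chain_card_le {n : ℕ} {E : Finset (Finset ℕ)} (hch : IsChainF E)
    (hsub : ∀ z ∈ E, z ⊆ Finset.Icc 1 n) : E.card ≤ n + 1 := by
  classical
  have hinj : Set.InjOn Finset.card (↑E : Set (Finset ℕ)) := by
    intro x hx y hy hxy
    have h1 : x ⊆ y := chain_subset_of_card_le hch hx hy (le_of_eq hxy)
    have h2 : y ⊆ x := chain_subset_of_card_le hch hy hx (le_of_eq hxy.symm)
    exact Finset.Subset.antisymm h1 h2
  have h1 : (E.image Finset.card).card = E.card := Finset.card_image_of_injOn hinj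
  have h2 : E.image Finset.card ⊆ Finset.range (n + 1) := by
    intro s hs
    obtain ⟨z, hz, rfl⟩ := Finset.mem_image.mp hs
    have := Finset.card_le_card (hsub z hz)
    rw [Nat.card_Icc] at this
    rw [Finset.mem_range]
    omega
  have := Finset.card_le_card h2
  rw [h1, Finset.card_range] at this
  exact this

lemma extend_one {n k : ℕ} (hk : 2 ≤ k) {F : Finset (Finset ℕ)}
    (hF : IsAntichainSaturated n k F) :
    ∀ t : ℕ, ∀ L : List (Finset (Finset ℕ)), L.length = k - 1 →
      (∀ E ∈ L, IsChainF E ∧ E ⊆ F) → (∀ A ∈ F, ∃ E ∈ L, A ∈ E) →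
      ∀ E ∈ L, ∅ ∈ E → Finset.Icc 1 n ∈ E → n + 1 - E.card ≤ t →
      ∃ D, E ⊆ D ∧ D ⊆ F ∧ IsChainF D ∧ D.card = n + 1 := by
  intro t
  induction t with
  | zero =>
      intro L hlen hprops hcov E hE h0 hIcc ht
      refine ⟨E, Finset.Subset.refl _, (hprops E hE).2, (hprops E hE).1, ?_⟩
      have := chain_card_le (n := n) (hprops E hE).1
        (fun z hz => hF.1 z ((hprops E hE).2 hz))
      omega
  | succ t iht =>
      intro L hlen hprops hcov E hE h0 hIcc ht
      classical
      have hEchain := (hprops E hE).1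
      have hEF := (hprops E hE).2
      have hcardle := chain_card_le (n := n) hEchain (fun z hz => hF.1 z (hEF hz))
      by_cases hfull : E.card = n + 1
      · exact ⟨E, Finset.Subset.refl _, hEF, hEchain, hfull⟩
      -- find a missing size s
      have himcard : (E.image Finset.card).card = E.card := by
        apply Finset.card_image_of_injOn
        intro x hx y hy hxy
        exact Finset.Subset.antisymm (chain_subset_of_card_le hEchain hx hy (le_of_eq hxy))
          (chain_subset_of_card_le hEchain hy hx (le_of_eq hxy.symm))
      have himsub : E.image Finset.card ⊆ Finset.range (n + 1) := by
        intro s hs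
        obtain ⟨z, hz, rfl⟩ := Finset.mem_image.mp hs
        have h1 := Finset.card_le_card (hF.1 z (hEF hz))
        rw [Nat.card_Icc] at h1
        rw [Finset.mem_range]
        omega
      have hmiss : ∃ s ∈ Finset.range (n + 1), s ∉ E.image Finset.card := by
        by_contra hc
        push_neg at hc
        have : Finset.range (n + 1) ⊆ E.image Finset.card := fun s hs => hc s hs
        have := Finset.card_le_card this
        rw [himcard, Finset.card_range] at this
        omega
      obtain ⟨s, hsr, hsmiss⟩ := hmiss
      rw [Finset.mem_range] at hsr
      have hs0 : 0 < s := by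
        rcases Nat.eq_zero_or_pos s with rfl | h
        · exact absurd (Finset.mem_image.mpr ⟨∅, h0, Finset.card_empty⟩) hsmiss
        · exact h
      have hsn : s < n := by
        rcases Nat.lt_or_ge s n with h | h
        · exact h
        · have hsn' : s = n := by omega
          have hmem : n ∈ E.image Finset.card :=
            Finset.mem_image.mpr ⟨Finset.Icc 1 n, hIcc, by rw [Nat.card_Icc]; omega⟩
          exact absurd hmem (hsn' ▸ hsmiss)
      set E1 := E.filter (fun z => z.card < s) with hE1def
      set E2 := E.filter (fun z => s ≤ z.card) with hE2def
      have hE1ne : E1.Nonempty := ⟨∅, Finset.mem_filter.mpr ⟨h0, by simpa using hs0⟩⟩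
      have hE2ne : E2.Nonempty := ⟨Finset.Icc 1 n, Finset.mem_filter.mpr ⟨hIcc, by
        rw [Nat.card_Icc]; omega⟩⟩
      obtain ⟨U, hU1, hU2⟩ := Finset.exists_max_image E1 Finset.card hE1ne
      obtain ⟨V, hV1, hV2⟩ := Finset.exists_min_image E2 Finset.card hE2ne
      have hUE : U ∈ E := (Finset.mem_filter.mp hU1).1
      have hVE : V ∈ E := (Finset.mem_filter.mp hV1).1
      have hUcard : U.card < s := (Finset.mem_filter.mp hU1).2
      have hVcard : s ≤ V.card := (Finset.mem_filter.mp hV1).2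
      have hUV : U ⊆ V := chain_subset_of_card_le hEchain hUE hVE (by omega)
      have hcons : ∀ z ∈ E, U ⊂ z → z ⊂ V → False := by
        intro z hz hUz hzV
        by_cases hzs : z.card < s
        · have := hU2 z (Finset.mem_filter.mpr ⟨hz, hzs⟩)
          have := Finset.card_lt_card hUz
          omega
        · push_neg at hzs
          have := hV2 z (Finset.mem_filter.mpr ⟨hz, hzs⟩)
          have := Finset.card_lt_card hzV
          omega
      obtain ⟨S, hSF, hUS, hVS, hSbd, hSch, hSsz⟩ :=
        consecutive_linked hk hF V.card L hlen hprops hcov E hE U hUE V hVE hUV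
          (by omega) hcons
      obtain ⟨z0, hz0S, hz0card⟩ := hSsz s (by omega) (by omega)
      have hz0E : z0 ∉ E := fun hc => hsmiss (Finset.mem_image.mpr ⟨z0, hc, hz0card⟩)
      set D' := E ∪ S with hD'def
      have hD'chain : IsChainF D' := by
        intro a ha b hb
        have hdich : ∀ w ∈ E, w ⊆ U ∨ V ⊆ w := by
          intro w hw
          by_cases hws : w.card < s
          · left
            exact chain_subset_of_card_le hEchain hw hUE (hU2 w (Finset.mem_filter.mpr ⟨hw, hws⟩))
          · right
            push_neg at hws
            exact chain_subset_of_card_le hEchain hVE hw (hV2 w (Finset.mem_filter.mpr ⟨hw, hws⟩))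
        rcases Finset.mem_union.mp ha with ha' | ha' <;> rcases Finset.mem_union.mp hb with hb' | hb'
        · exact hEchain a ha' b hb'
        · rcases hdich a ha' with h | h
          · left; exact h.trans (hSbd b hb').1
          · right; exact (hSbd b hb').2.trans h
        · rcases hdich b hb' with h | h
          · right; exact h.trans (hSbd a ha').1
          · left; exact (hSbd a ha').2.trans h
        · exact hSch a ha' b hb'
      have hD'F : D' ⊆ F := by
        intro z hz
        rcases Finset.mem_union.mp hz with h | h
        · exact hEF h
        · exact hSF h
      have hED' : E ⊆ D' := Finset.subset_union_left
      have hD'card : E.card < D'.card := by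
        apply Finset.card_lt_card
        refine ⟨hED', fun hc => hz0E (hc (Finset.mem_union_right _ hz0S))⟩
      have hD'le := chain_card_le (n := n) hD'chain (fun z hz => hF.1 z (hD'F hz))
      obtain ⟨D, hD1, hD2, hD3, hD4⟩ := iht (D' :: L.erase E)
        (by rw [List.length_cons, List.length_erase_of_mem hE, hlen]; omega)
        (by
          intro E'' hE''
          rcases List.mem_cons.mp hE'' with rfl | hE''
          · exact ⟨hD'chain, hD'F⟩
          · exact hprops E'' (List.mem_of_mem_erase hE''))
        (by
          intro z hz
          obtain ⟨E'', hE''L, hzE''⟩ := hcov z hz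
          rcases eq_or_ne E'' E with rfl | hne
          · exact ⟨D', by simp, hED' hzE''⟩
          · exact ⟨E'', by simp [(List.mem_erase_of_ne hne).mpr hE''L], hzE''⟩)
        D' (by simp) (hED' h0) (hED' hIcc) (by omega)
      exact ⟨D, hED'.trans hD1, hD2, hD3, hD4⟩

lemma extend_all {n k : ℕ} (hk : 2 ≤ k) {F : Finset (Finset ℕ)}
    (hF : IsAntichainSaturated n k F) :
    ∀ (L2 L1 : List (Finset (Finset ℕ))), (L1 ++ L2).length = k - 1 →
      (∀ E ∈ L1 ++ L2, IsChainF E ∧ E ⊆ F) → (∀ A ∈ F, ∃ E ∈ L1 ++ L2, A ∈ E) →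
      (∀ E ∈ L1, E.card = n + 1) → (∀ E ∈ L2, ∅ ∈ E ∧ Finset.Icc 1 n ∈ E) →
      ∃ L' : List (Finset (Finset ℕ)), L'.length = k - 1 ∧
        (∀ E ∈ L', IsChainF E ∧ E ⊆ F ∧ E.card = n + 1) ∧ (∀ A ∈ F, ∃ E ∈ L', A ∈ E) := by
  intro L2
  induction L2 with
  | nil =>
      intro L1 hlen hprops hcov hfull _
      refine ⟨L1, by simpa using hlen, ?_, ?_⟩
      · intro E hE
        have h1 := hprops E (by simp [hE])
        exact ⟨h1.1, h1.2, hfull E hE⟩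
      · intro A hA
        obtain ⟨E, hE, hAE⟩ := hcov A hA
        exact ⟨E, by simpa using hE, hAE⟩
  | cons E0 L2' ih =>
      intro L1 hlen hprops hcov hfull hmem
      obtain ⟨D, hD1, hD2, hD3, hD4⟩ := extend_one hk hF (n + 1) (L1 ++ E0 :: L2') hlen hprops
        hcov E0 (by simp) (hmem E0 (by simp)).1 (hmem E0 (by simp)).2 (by omega)
      apply ih (L1 ++ [D])
      · simpa using hlen
      · intro E hE
        simp only [List.append_assoc, List.cons_append, List.nil_append, List.mem_append,
          List.mem_cons] at hE
        rcases hE with h | rfl | h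
        · exact hprops E (by simp [h])
        · exact ⟨hD3, hD2⟩
        · exact hprops E (by simp [h])
      · intro A hA
        obtain ⟨E, hE, hAE⟩ := hcov A hA
        simp only [List.mem_append, List.mem_cons] at hE
        rcases hE with h | rfl | h
        · exact ⟨E, by simp [h], hAE⟩
        · exact ⟨D, by simp, hD1 hAE⟩
        · exact ⟨E, by simp [h], hAE⟩
      · intro E hE
        simp only [List.mem_append, List.mem_singleton] at hE
        rcases hE with h | rfl
        · exact hfull E h
        · exact hD4
      · intro E hE
        exact hmem E (by simp [hE])


/-- If `F` is a `k`-antichain saturated family of subsets of `[n]`, then `F` is the union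
of `k - 1` full chains. -/
theorem saturated_is_union_of_full_chains (n k : ℕ) (hk : 2 ≤ k)
    (F : Finset (Finset ℕ)) (hF : IsAntichainSaturated n k F) :
    ∃ D : Fin (k - 1) → Finset (Finset ℕ),
      (∀ i, IsFullChain n (D i)) ∧ F = Finset.univ.biUnion D := by
  classical
  obtain ⟨L0, hL0len, hL0props, _, hL0cov⟩ :=
    dilworth F.card F le_rfl (k - 1) (fun S hS hanti => no_big_anti hF.2.1 hS hanti)
  set LP := L0 ++ List.replicate (k - 1 - L0.length) ∅ with hLPdef
  have hLPlen : LP.length = k - 1 := by simp [hLPdef]; omega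
  have hLPprops : ∀ E ∈ LP, IsChainF E ∧ E ⊆ F := by
    intro E hE
    rcases List.mem_append.mp hE with h | h
    · exact hL0props E h
    · have : E = ∅ := List.eq_of_mem_replicate h
      subst this
      exact ⟨fun a ha => absurd ha (Finset.notMem_empty a), Finset.empty_subset _⟩
  have hLPcov : ∀ A ∈ F, ∃ E ∈ LP, A ∈ E := by
    intro A hA
    obtain ⟨E, hE, hAE⟩ := hL0cov A hA
    exact ⟨E, List.mem_append.mpr (Or.inl hE), hAE⟩
  have h0F : ∅ ∈ F := empty_mem hk hF
  have hIccF : Finset.Icc 1 n ∈ F := icc_mem hk hF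
  set L1 := LP.map (fun E => insert ∅ (insert (Finset.Icc 1 n) E)) with hL1def
  have hL1len : L1.length = k - 1 := by simp [hL1def, hLPlen]
  have hL1props : ∀ E ∈ L1, IsChainF E ∧ E ⊆ F := by
    intro E hE
    obtain ⟨E', hE', rfl⟩ := List.mem_map.mp hE
    have hmemchar : ∀ z, z ∈ insert ∅ (insert (Finset.Icc 1 n) E') ↔
        z = ∅ ∨ z = Finset.Icc 1 n ∨ z ∈ E' := by
      intro z
      simp [Finset.mem_insert]
    constructor
    · intro a ha b hb
      rcases (hmemchar a).mp ha with rfl | rfl | ha' <;> rcases (hmemchar b).mp hb with rfl | rfl | hb'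
      · left; exact Finset.Subset.refl _
      · left; exact Finset.empty_subset _
      · left; exact Finset.empty_subset _
      · right; exact Finset.empty_subset _
      · left; exact Finset.Subset.refl _
      · right; exact hF.1 b ((hLPprops E' hE').2 hb')
      · right; exact Finset.empty_subset _
      · left; exact hF.1 a ((hLPprops E' hE').2 ha')
      · exact (hLPprops E' hE').1 a ha' b hb'
    · intro z hz
      rcases (hmemchar z).mp hz with rfl | rfl | hz'
      · exact h0F
      · exact hIccF
      · exact (hLPprops E' hE').2 hz'
  have hL1cov : ∀ A ∈ F, ∃ E ∈ L1, A ∈ E := by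
    intro A hA
    obtain ⟨E, hE, hAE⟩ := hLPcov A hA
    exact ⟨insert ∅ (insert (Finset.Icc 1 n) E), List.mem_map.mpr ⟨E, hE, rfl⟩,
      Finset.mem_insert_of_mem (Finset.mem_insert_of_mem hAE)⟩
  have hL1mem : ∀ E ∈ L1, ∅ ∈ E ∧ Finset.Icc 1 n ∈ E := by
    intro E hE
    obtain ⟨E', _, rfl⟩ := List.mem_map.mp hE
    exact ⟨Finset.mem_insert_self _ _, Finset.mem_insert_of_mem (Finset.mem_insert_self _ _)⟩
  obtain ⟨L', hL'len, hL'props, hL'cov⟩ := extend_all hk hF L1 [] (by simpa using hL1len)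
    (by simpa using hL1props) (by simpa using hL1cov) (by simp) (by simpa using hL1mem)
  refine ⟨fun i => L'.get ⟨i.1, by omega⟩, ?_, ?_⟩
  · intro i
    have hmem : L'.get ⟨i.1, by omega⟩ ∈ L' := List.get_mem L' _
    obtain ⟨h1, h2, h3⟩ := hL'props _ hmem
    exact ⟨⟨fun A hA => hF.1 A (h2 hA), h1⟩, h3⟩
  · ext z
    simp only [Finset.mem_biUnion, Finset.mem_univ, true_and]
    constructor
    · intro hz
      obtain ⟨E, hE, hzE⟩ := hL'cov z hz
      obtain ⟨j, hj⟩ := List.mem_iff_get.mp hE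
      refine ⟨⟨j.1, by omega⟩, ?_⟩
      have : (⟨(⟨j.1, by omega⟩ : Fin (k-1)).1, by omega⟩ : Fin L'.length) = j := by
        apply Fin.ext; rfl
      rw [this, hj]
      exact hzE
    · intro ⟨i, hi⟩
      exact (hL'props _ (List.get_mem L' _)).2.1 hi
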